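/- With V and its Kleene star V* as above, for all α₁, …, αₙ ∈ Dom(O_V) we have O_{V*}(α₁α₂⋯αₙ) = O_V(α₁) ⊙ O_V(α₂) ⊙ ⋯ ⊙ O_V(αₙ), where ⊙ is the product-monoid operation on Ω* × M (concatenation in the first coordinate and the monoid multiplication in the second). -/

import Mathlib

open scoped NNReal Computability
open Classical

noncomputable section

/-- The free monoid structure on lists (concatenation). -/
instance listMonoid (Ω : Type) : Monoid (List Ω) where
  mul := (· ++ ·)
  one := []
  mul_assoc := List.append_assoc
  one_mul := fun _ => rfl
  mul_one := List.append_nil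

/-- A subsequential transducer.  `step q a = some (q', m)` encodes that both the
transition function `δ q a = q'` and the output function `λ q a = m` are defined
(they have equal domains).  `rho q = some r` encodes that `q` is final with final
output `r`. -/
structure Transducer (A Q M : Type) [Monoid M] where
  start : Q
  step : Q → A → Option (Q × M)
  init : M
  rho : Q → Option M

namespace Transducer

variable {A Q M : Type} [Monoid M]

def delta (T : Transducer A Q M) (q : Q) (a : A) : Option Q := (T.step q a).map Prod.fst

def lam (T : Transducer A Q M) (q : Q) (a : A) : Option M := (T.step q a).map Prod.snd

/-- Generalized (partial) transition function `δ*`. -/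
def dstar (T : Transducer A Q M) : Q → List A → Option Q
  | q, [] => some q
  | q, a :: w => (T.delta q a).bind fun q' => T.dstar q' w

/-- Generalized (partial) output function `λ*`. -/
def lstar (T : Transducer A Q M) : Q → List A → Option M
  | _, [] => some 1
  | q, a :: w => (T.step q a).bind fun x => (T.lstar x.1 w).map fun m => x.2 * m

/-- `O_T^q(α)`, defined iff `δ*(q,α)` is a final state. -/
def O (T : Transducer A Q M) (q : Q) (α : List A) : Option M :=
  (T.dstar q α).bind fun p => (T.lstar q α).bind fun m => (T.rho p).map fun r => m * r

/-- The function `O_T` represented by the transducer. -/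
def Ofull (T : Transducer A Q M) (α : List A) : Option M :=
  (T.O T.start α).map fun m => T.init * m

end Transducer

/-- A subsequential failure transducer: a transducer together with a partial failure
transition function and failure output function (of equal domains, encoded by
`failStep`). -/
structure FailTransducer (A Q M : Type) [Monoid M] extends Transducer A Q M where
  failStep : Q → Option (Q × M)

namespace FailTransducer

variable {A Q M : Type} [Monoid M]

def fail (T : FailTransducer A Q M) (q : Q) : Option Q := (T.failStep q).map Prod.fst

def phi (T : FailTransducer A Q M) (q : Q) : Option M := (T.failStep q).map Prod.snd

/-- The completed transition/output functions `δ_f`, `λ_f`, as the smallest relation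
closed under the two defining clauses. `DF T q a q' m` means `δ_f(q,a) = q'` and
`λ_f(q,a) = m`. -/
inductive DF (T : FailTransducer A Q M) : Q → A → Q → M → Prop
  | base {q : Q} {a : A} {q' : Q} {m : M} :
      T.step q a = some (q', m) → DF T q a q' m
  | fail {q : Q} {a : A} {p : Q} {mf : M} {q' : Q} {m : M} :
      T.step q a = none → T.failStep q = some (p, mf) → DF T p a q' m →
      DF T q a q' (mf * m)

/-- Word extension of the completed transition and output functions. -/
inductive DFStar (T : FailTransducer A Q M) : Q → List A → Q → M → Prop
  | nil {q : Q} : DFStar T q [] q 1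
  | cons {q : Q} {a : A} {w : List A} {q' : Q} {m : M} {q'' : Q} {m' : M} :
      DF T q a q' m → DFStar T q' w q'' m' → DFStar T q (a :: w) q'' (m * m')

/-- `ORel T q α m` holds iff `O_T^q(α)` is defined and equal to `m`. -/
def ORel (T : FailTransducer A Q M) (q : Q) (α : List A) (m : M) : Prop :=
  ∃ p m' r, DFStar T q α p m' ∧ T.rho p = some r ∧ m = m' * r

/-- `OFullRel T α m` holds iff `O_T(α)` is defined and equal to `m`. -/
def OFullRel (T : FailTransducer A Q M) (α : List A) (m : M) : Prop :=
  ∃ m', T.ORel T.start α m' ∧ m = T.init * m'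

/-- The completed transition/output as a partial function (noncomputable). -/
def dfFun (T : FailTransducer A Q M) (q : Q) (a : A) : Option (Q × M) :=
  if h : ∃ x : Q × M, DF T q a x.1 x.2 then some h.choose else none

/-- Word extension of the completed transition/output as a partial function. -/
def dfStarFun (T : FailTransducer A Q M) (q : Q) (α : List A) : Option (Q × M) :=
  if h : ∃ x : Q × M, DFStar T q α x.1 x.2 then some h.choose else none

/-- `O_T^q` as a partial function. -/
def Ofun (T : FailTransducer A Q M) (q : Q) (α : List A) : Option M :=
  if h : ∃ m, T.ORel q α m then some h.choose else none

/-- `O_T` as a partial function. -/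
def OfullFun (T : FailTransducer A Q M) (α : List A) : Option M :=
  (T.Ofun T.start α).map fun m => T.init * m

/-- A failure transducer is monotonic if failure transitions preserve finality and
enabled input symbols. -/
def Monotonic (T : FailTransducer A Q M) : Prop :=
  ∀ q p, T.fail q = some p →
    ((T.rho q).isSome → (T.rho p).isSome) ∧
    ∀ a, (T.delta q a).isSome → (T.delta p a).isSome

/-- `n`-fold iteration of the failure transition function. -/
def failIter (T : FailTransducer A Q M) : ℕ → Q → Option Q
  | 0, q => some q
  | n + 1, q => (T.fail q).bind (T.failIter n)

/-- No state lies on a failure cycle. -/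
def NoFailCycles (T : FailTransducer A Q M) : Prop :=
  ∀ q n, 0 < n → T.failIter n q ≠ some q

/-- A failure transducer over `ℝ≥0` is probabilistic if the function it represents
is a probability distribution over `Σ*`. -/
def Probabilistic (F : FailTransducer A Q ℝ≥0) : Prop :=
  ∑' α : List A, ((F.OfullFun α).getD 0) = 1

end FailTransducer

/-- The composition `T ∘ F` of a transducer `T` with outputs in `Ω* × M` with a
failure transducer `F` over `Ω` (Definition 4). -/
def compStep {A Ω Q₁ Q₂ M : Type} [CommMonoid M] (T : Transducer A Q₁ (List Ω × M))
    (F : FailTransducer Ω Q₂ M) (p : Q₁ × Q₂) (a : A) : Option ((Q₁ × Q₂) × M) :=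
  (T.step p.1 a).bind fun x =>
    match x.2.1 with
    | [] => some ((x.1, p.2), x.2.2)
    | ω :: _ =>
      if (F.delta p.2 ω).isSome then
        (F.dfStarFun p.2 x.2.1).map fun y => ((x.1, y.1), x.2.2 * y.2)
      else none

def comp {A Ω Q₁ Q₂ M : Type} [CommMonoid M] (T : Transducer A Q₁ (List Ω × M))
    (F : FailTransducer Ω Q₂ M) : FailTransducer A (Q₁ × Q₂) M where
  start := (T.start, ((F.dfStarFun F.start T.init.1).map Prod.fst).getD F.start)
  step := compStep T F
  init := T.init.2 * F.init * ((F.dfStarFun F.start T.init.1).map Prod.snd).getD 1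
  rho := fun p => (T.rho p.1).bind fun x =>
    (F.dfStarFun p.2 x.1).bind fun y => (F.rho y.1).map fun r => x.2 * y.2 * r
  failStep := fun p => (F.failStep p.2).map fun y => ((p.1, y.1), y.2)

/-- The Kleene star of a transducer `V` (Definition 16): transitions entering a final
state are redirected to the initial state, which becomes the unique final state with
trivial final output; the initial output becomes trivial. -/
def kstar {A Q N : Type} [Monoid N] (V : Transducer A Q N) : Transducer A Q N where
  start := V.start
  step := fun p a => (V.step p a).map fun x =>
    ((if (V.rho x.1).isSome then V.start else x.1), x.2)
  init := 1
  rho := fun q => if q = V.start then some 1 else none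

/-- `O_T(α ∣ β)` for a transducer with outputs in `Ω* × ℝ≥0`. -/
def condVal {A Ω Q : Type} (T : Transducer A Q (List Ω × ℝ≥0)) (β : List Ω)
    (α : List A) : ℝ≥0 :=
  match T.Ofull α with
  | some x => if x.1 = β then x.2 else 0
  | none => 0

/-- A conditional probabilistic transducer: for every `β` in the first projection of
the range of `O_T`, the conditional outputs `O_T(· ∣ β)` sum to `1`. -/
def CondProb {A Ω Q : Type} (T : Transducer A Q (List Ω × ℝ≥0)) : Prop :=
  ∀ β : List Ω, (∃ α x, T.Ofull α = some x ∧ x.1 = β) →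
    ∑' α : List A, condVal T β α = 1

end
section Aux

variable {A Q N : Type} [Monoid N]

theorem dstar_lstar_append (T : Transducer A Q N) (u : List A) {q p : Q} {m : N}
    (hd : T.dstar q u = some p) (hl : T.lstar q u = some m) (v : List A) :
    T.dstar q (u ++ v) = T.dstar p v ∧
      T.lstar q (u ++ v) = (T.lstar p v).map fun m' => m * m' := by
  induction u generalizing q m with
  | nil =>
    simp only [Transducer.dstar, Transducer.lstar, Option.some.injEq] at hd hl
    subst hd; subst hl
    refine ⟨rfl, ?_⟩
    simp [Transducer.lstar, one_mul]
  | cons a u ih =>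
    cases hs : T.step q a with
    | none =>
      simp [Transducer.dstar, Transducer.delta, hs] at hd
    | some x =>
      obtain ⟨q', m₀⟩ := x
      simp only [Transducer.dstar, Transducer.lstar, Transducer.delta, hs,
        Option.map_some, Option.bind_some] at hd hl
      obtain ⟨m₁, hl₁, hm⟩ := Option.map_eq_some_iff.mp hl
      obtain ⟨h1, h2⟩ := ih hd hl₁
      subst hm
      constructor
      · simpa [Transducer.dstar, Transducer.delta, hs] using h1
      · have e1 : T.lstar q (a :: u ++ v) =
            (T.step q a).bind fun x => (T.lstar x.1 (u ++ v)).map fun m' => x.2 * m' := rfl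
        rw [e1, hs, Option.bind_some, h2, Option.map_map]
        cases T.lstar p v <;> simp [mul_assoc]

theorem kstar_run (V : Transducer A Q N)
    (hnoout : ∀ q a, (V.rho q).isSome → V.delta q a = none) :
    ∀ (w : List A) (q p : Q) (m r : N), w ≠ [] → V.dstar q w = some p →
      V.lstar q w = some m → V.rho p = some r →
      (kstar V).dstar q w = some V.start ∧ (kstar V).lstar q w = some m := by
  intro w
  induction w with
  | nil => intro q p m r h; exact absurd rfl h
  | cons a w ih =>
    intro q p m r _ hd hl hr
    cases hs : V.step q a with
    | none => simp [Transducer.dstar, Transducer.delta, hs] at hd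
    | some x =>
      obtain ⟨q', m₀⟩ := x
      simp only [Transducer.dstar, Transducer.lstar, Transducer.delta, hs,
        Option.map_some, Option.bind_some] at hd hl
      obtain ⟨m₁, hl₁, hm⟩ := Option.map_eq_some_iff.mp hl
      subst hm
      cases w with
      | nil =>
        simp only [Transducer.dstar, Option.some.injEq] at hd
        subst hd
        simp only [Transducer.lstar, Option.some.injEq] at hl₁
        subst hl₁
        have hks : (kstar V).step q a = some (V.start, m₀) := by
          simp [kstar, hs, hr]
        refine ⟨?_, ?_⟩
        · simp [Transducer.dstar, Transducer.delta, hks]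
        · simp [Transducer.lstar, hks]
      | cons b w' =>
        have hq' : V.rho q' = none := by
          cases hrq : V.rho q' with
          | none => rfl
          | some _ =>
            have := hnoout q' b (by simp [hrq])
            simp [Transducer.dstar, this] at hd
        have hks : (kstar V).step q a = some (q', m₀) := by
          simp [kstar, hs, hq']
        obtain ⟨h1, h2⟩ := ih q' p m₁ r (by simp) hd hl₁ hr
        refine ⟨?_, ?_⟩
        · simpa [Transducer.dstar, Transducer.delta, hks] using h1
        · have e1 : (kstar V).lstar q (a :: b :: w') =
              ((kstar V).step q a).bind fun x =>
                ((kstar V).lstar x.1 (b :: w')).map fun m' => x.2 * m' := rfl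
          rw [e1, hks, Option.bind_some, h2, Option.map_some]

end Aux

/-- `O_{V*}` is multiplicative over concatenations of words from
`Dom(O_V)`. -/
theorem stmt11 {A Ω Q M : Type} [CommMonoid M] (V : Transducer A Q (List Ω × M))
    (hpf : ∀ α γ, (V.Ofull α).isSome → (V.Ofull (α ++ γ)).isSome → γ = [])
    (hnoin : ∀ p a, V.delta p a ≠ some V.start)
    (hnoout : ∀ q a, (V.rho q).isSome → V.delta q a = none)
    (hsnf : V.rho V.start = none)
    (hinit : V.init = 1)
    (hrho1 : ∀ q m, V.rho q = some m → m = 1) :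
    ∀ L : List (List A), (∀ w ∈ L, (V.Ofull w).isSome) →
      (kstar V).Ofull L.flatten = some ((L.map fun w => (V.Ofull w).getD 1).prod) := by
  intro L
  induction L with
  | nil =>
    intro _
    simp [Transducer.Ofull, Transducer.O, Transducer.dstar, Transducer.lstar, kstar]
  | cons w L ih =>
    intro h
    -- extract V's run on w
    have hw : (V.Ofull w).isSome := h w (by simp)
    obtain ⟨y, hy⟩ := Option.isSome_iff_exists.mp hw
    have hy' := hy
    simp only [Transducer.Ofull] at hy'
    obtain ⟨z, hz, hzv⟩ := Option.map_eq_some_iff.mp hy'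
    simp only [Transducer.O] at hz
    obtain ⟨p, hp, hrest⟩ := Option.bind_eq_some_iff.mp hz
    obtain ⟨m, hm, hrest2⟩ := Option.bind_eq_some_iff.mp hrest
    obtain ⟨r, hr, hrv⟩ := Option.map_eq_some_iff.mp hrest2
    have hr1 : r = 1 := hrho1 p r hr
    have hyval : y = m := by
      rw [← hzv, ← hrv, hr1, hinit, one_mul, mul_one]
    have hwne : w ≠ [] := by
      intro hwe
      subst hwe
      simp only [Transducer.dstar, Option.some.injEq] at hp
      rw [← hp, hsnf] at hr
      exact Option.some_ne_none r hr.symm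
    obtain ⟨kd, kl⟩ := kstar_run V hnoout w V.start p m r hwne hp hm hr
    -- IH analysis
    have ih' := ih (fun u hu => h u (by simp [hu]))
    simp only [Transducer.Ofull] at ih'
    obtain ⟨m₂, hm₂, hm₂v⟩ := Option.map_eq_some_iff.mp ih'
    simp only [Transducer.O] at hm₂
    obtain ⟨p₂, hp₂, hrest₂⟩ := Option.bind_eq_some_iff.mp hm₂
    obtain ⟨m₃, hm₃, hrest₃⟩ := Option.bind_eq_some_iff.mp hrest₂
    obtain ⟨r₂, hr₂, hr₂v⟩ := Option.map_eq_some_iff.mp hrest₃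
    have hks : (kstar V).start = V.start := rfl
    rw [hks] at hp₂ hm₃
    obtain ⟨ad, al⟩ := dstar_lstar_append (kstar V) w (q := V.start) kd kl L.flatten
    have hdfull : (kstar V).dstar V.start (w ++ L.flatten) = some p₂ := by
      rw [ad, hp₂]
    have hlfull : (kstar V).lstar V.start (w ++ L.flatten) = some (m * m₃) := by
      rw [al, hm₃]; rfl
    have hfl : (w :: L).flatten = w ++ L.flatten := List.flatten_cons
    rw [hfl]
    simp only [Transducer.Ofull, Transducer.O, hks, hdfull, hlfull, hr₂,
      Option.bind_some, Option.map_some, Option.some.injEq]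
    have hki : (kstar V).init = 1 := rfl
    rw [hki]
    simp only [Transducer.O] at hm₂v
    rw [List.map_cons, List.prod_cons, hz, Option.map_some, Option.getD_some, hzv,
      hyval, ← hm₂v, hki, ← hr₂v]
    simp [mul_assoc]
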